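/- The Newton primitives P_n of NSymm, defined recursively by P_n = nZ_n - (Z_{n-1}P_1 + Z_{n-2}P_2 + ... + Z_1 P_{n-1}), are primitive elements of the bialgebra NSymm: μ(P_n) = P_n ⊗ 1 + 1 ⊗ P_n. -/

import Mathlib

open TensorProduct

/-- `NSymm` is the free associative algebra `ℤ⟨Z_1, Z_2, ...⟩`. -/
noncomputable abbrev NSymm : Type := FreeAlgebra ℤ ℕ

/-- `Z 0 = 1` and `Z (n+1)` is the generator `Z_{n+1}` of `NSymm`. -/
noncomputable def Z : ℕ → NSymm
  | 0 => 1
  | n + 1 => FreeAlgebra.ι ℤ n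

/-- The comultiplication of `NSymm`: the algebra homomorphism with
`μ(Z_n) = Σ_{i+j=n} Z_i ⊗ Z_j`. -/
noncomputable def mu : NSymm →ₐ[ℤ] @TensorProduct ℤ _ NSymm NSymm _ _ Algebra.toModule Algebra.toModule :=
  FreeAlgebra.lift ℤ fun n => ∑ i ∈ Finset.range (n + 2), Z i ⊗ₜ[ℤ] Z (n + 1 - i)

/-- The Newton primitives, defined by the recursion
`P n = n Z_n - (Z_{n-1} P_1 + Z_{n-2} P_2 + ⋯ + Z_1 P_{n-1})` (and `P 0 = 0`). -/
noncomputable def P : ℕ → NSymm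
  | 0 => 0
  | n + 1 =>
    (n + 1) • Z (n + 1) - ∑ i ∈ (Finset.range n).attach, Z (n - i.1) * P (i.1 + 1)
  decreasing_by exact Nat.succ_lt_succ (Finset.mem_range.mp i.2)

section

@[reducible] noncomputable def NSymm.instModuleAlg : Module ℤ NSymm := Algebra.toModule

attribute [local instance] NSymm.instModuleAlg

lemma Z_zero : Z 0 = 1 := rfl

lemma P_succ (n : ℕ) : P (n + 1)
    = (n + 1) • Z (n + 1) - ∑ i ∈ Finset.range n, Z (n - i) * P (i + 1) := by
  rw [P]
  congr 1
  exact Finset.sum_attach (Finset.range n) (fun i => Z (n - i) * P (i + 1))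

lemma newton (m : ℕ) :
    ∑ i ∈ Finset.range (m + 1), Z (m - i) * P (i + 1) = (m + 1) • Z (m + 1) := by
  rw [Finset.sum_range_succ, Nat.sub_self, Z_zero, one_mul, P_succ, add_sub_cancel]

lemma mu_Z (m : ℕ) :
    mu (Z m) = ∑ i ∈ Finset.range (m + 1), Z i ⊗ₜ[ℤ] Z (m - i) := by
  cases m with
  | zero => simp [Z_zero, Algebra.TensorProduct.one_def]
  | succ k =>
      show mu (FreeAlgebra.ι ℤ k) = _
      rw [mu, FreeAlgebra.lift_ι_apply]

lemma tri {M : Type*} [AddCommMonoid M] (n : ℕ) (f : ℕ → ℕ → M) :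
    ∑ i ∈ Finset.range n, ∑ j ∈ Finset.range (n - i), f i j
      = ∑ j ∈ Finset.range n, ∑ i ∈ Finset.range (n - j), f i j := by
  rw [Finset.sum_sigma', Finset.sum_sigma']
  refine Finset.sum_nbij' (fun p => ⟨p.2, p.1⟩) (fun p => ⟨p.2, p.1⟩) ?_ ?_ ?_ ?_ ?_ <;>
    (intro p hp; simp only [Finset.mem_sigma, Finset.mem_range] at *) <;> first | omega | rfl

lemma key1 (n : ℕ) :
    ∑ i ∈ Finset.range n, ∑ a ∈ Finset.range (n - i), (Z a * P (i + 1)) ⊗ₜ[ℤ] Z (n - i - a)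
      = ∑ c ∈ Finset.range n, ((n - c) • Z (n - c)) ⊗ₜ[ℤ] Z (c + 1) := by
  have h1 : ∑ i ∈ Finset.range n, ∑ a ∈ Finset.range (n - i),
        (Z a * P (i + 1)) ⊗ₜ[ℤ] Z (n - i - a)
      = ∑ i ∈ Finset.range n, ∑ c ∈ Finset.range (n - i),
        (Z (n - i - 1 - c) * P (i + 1)) ⊗ₜ[ℤ] Z (c + 1) := by
    refine Finset.sum_congr rfl fun i hi => ?_
    rw [← Finset.sum_range_reflect]
    refine Finset.sum_congr rfl fun c hc => ?_
    simp only [Finset.mem_range] at hi hc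
    rw [show n - i - (n - i - 1 - c) = c + 1 by omega]
  rw [h1, tri]
  refine Finset.sum_congr rfl fun c hc => ?_
  simp only [Finset.mem_range] at hc
  rw [← TensorProduct.sum_tmul]
  congr 1
  have hnew := newton (n - 1 - c)
  rw [show n - 1 - c + 1 = n - c by omega] at hnew
  rw [← hnew]
  refine Finset.sum_congr rfl fun i _ => ?_
  rw [show n - i - 1 - c = n - 1 - c - i by omega]

lemma key2 (n : ℕ) :
    ∑ i ∈ Finset.range n, ∑ a ∈ Finset.range (n - i),
        Z (a + 1) ⊗ₜ[ℤ] (Z (n - i - (a + 1)) * P (i + 1))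
      = ∑ c ∈ Finset.range n, Z (c + 1) ⊗ₜ[ℤ] ((n - c) • Z (n - c)) := by
  rw [tri]
  refine Finset.sum_congr rfl fun c hc => ?_
  simp only [Finset.mem_range] at hc
  rw [← TensorProduct.tmul_sum]
  congr 1
  have hnew := newton (n - 1 - c)
  rw [show n - 1 - c + 1 = n - c by omega] at hnew
  rw [← hnew]
  refine Finset.sum_congr rfl fun i _ => ?_
  rw [show n - i - (c + 1) = n - 1 - c - i by omega]

lemma key3 (n : ℕ) :
    (n + 1) • ∑ a ∈ Finset.range (n + 2), Z a ⊗ₜ[ℤ] Z (n + 1 - a)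
      = ((n + 1) • Z (n + 1)) ⊗ₜ[ℤ] 1 + 1 ⊗ₜ[ℤ] ((n + 1) • Z (n + 1))
        + (∑ c ∈ Finset.range n, ((n - c) • Z (n - c)) ⊗ₜ[ℤ] Z (c + 1)
          + ∑ c ∈ Finset.range n, Z (c + 1) ⊗ₜ[ℤ] ((n - c) • Z (n - c))) := by
  have hmid : ∑ c ∈ Finset.range n, ((n - c) • Z (n - c)) ⊗ₜ[ℤ] Z (c + 1)
        + ∑ c ∈ Finset.range n, Z (c + 1) ⊗ₜ[ℤ] ((n - c) • Z (n - c))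
      = (n + 1) • ∑ a ∈ Finset.range n, Z (a + 1) ⊗ₜ[ℤ] Z (n - a) := by
    have hA : ∑ c ∈ Finset.range n, ((n - c) • Z (n - c)) ⊗ₜ[ℤ] Z (c + 1)
        = ∑ c ∈ Finset.range n, (c + 1) • (Z (c + 1) ⊗ₜ[ℤ] Z (n - c)) := by
      rw [← Finset.sum_range_reflect]
      refine Finset.sum_congr rfl fun c hc => ?_
      simp only [Finset.mem_range] at hc
      rw [show n - (n - 1 - c) = c + 1 by omega, show n - 1 - c + 1 = n - c by omega,
        smul_tmul']
    have hB : ∑ c ∈ Finset.range n, Z (c + 1) ⊗ₜ[ℤ] ((n - c) • Z (n - c))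
        = ∑ c ∈ Finset.range n, (n - c) • (Z (c + 1) ⊗ₜ[ℤ] Z (n - c)) := by
      refine Finset.sum_congr rfl fun c hc => ?_
      rw [tmul_smul]
    rw [hA, hB, ← Finset.sum_add_distrib, Finset.smul_sum]
    refine Finset.sum_congr rfl fun c hc => ?_
    simp only [Finset.mem_range] at hc
    rw [← add_smul, show c + 1 + (n - c) = n + 1 by omega]
  rw [hmid, Finset.sum_range_succ, Finset.sum_range_succ', Nat.sub_self, Z_zero,
    Nat.sub_zero, smul_add, smul_add, smul_tmul', tmul_smul]
  have : ∀ a ∈ Finset.range n, Z (a + 1) ⊗ₜ[ℤ] Z (n + 1 - (a + 1)) = Z (a + 1) ⊗ₜ[ℤ] Z (n - a) := by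
    intro a _; rw [Nat.succ_sub_succ]
  rw [Finset.sum_congr rfl this]
  simp only [smul_tmul']
  abel

lemma prim (n : ℕ) : mu (P (n + 1)) = P (n + 1) ⊗ₜ[ℤ] 1 + 1 ⊗ₜ[ℤ] P (n + 1) := by
  induction n using Nat.strong_induction_on with
  | _ n ih =>
  rw [P_succ, map_sub, map_nsmul, map_sum, mu_Z]
  have hterm : ∀ i ∈ Finset.range n, mu (Z (n - i) * P (i + 1))
      = ((∑ a ∈ Finset.range (n - i), (Z a * P (i + 1)) ⊗ₜ[ℤ] Z (n - i - a))
          + (Z (n - i) * P (i + 1)) ⊗ₜ[ℤ] 1)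
        + ((∑ a ∈ Finset.range (n - i), Z (a + 1) ⊗ₜ[ℤ] (Z (n - i - (a + 1)) * P (i + 1)))
          + 1 ⊗ₜ[ℤ] (Z (n - i) * P (i + 1))) := by
    intro i hi
    simp only [Finset.mem_range] at hi
    rw [map_mul, mu_Z, ih i hi, mul_add, Finset.sum_mul, Finset.sum_mul]
    simp only [Algebra.TensorProduct.tmul_mul_tmul, mul_one, one_mul]
    rw [Finset.sum_range_succ, Finset.sum_range_succ', Nat.sub_self, Z_zero, Nat.sub_zero]
  rw [Finset.sum_congr rfl hterm, Finset.sum_add_distrib, Finset.sum_add_distrib,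
    Finset.sum_add_distrib, key1, key2, ← TensorProduct.sum_tmul, ← TensorProduct.tmul_sum,
    key3, sub_tmul, tmul_sub]
  abel

end

/-- Proposition 4.3: the Newton polynomials `P n` are primitive elements of `NSymm`. -/
theorem stmt_5 (n : ℕ) (hn : 1 ≤ n) :
    mu (P n) = P n ⊗ₜ[ℤ] 1 + 1 ⊗ₜ[ℤ] P n := by
  obtain ⟨m, rfl⟩ := Nat.exists_eq_add_of_le hn
  rw [add_comm]
  exact prim m
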